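/- (Soundness of the approximation rule for →) For any Kripke frame F, valuation V, assignment g, and fresh nominals j, k not occurring in α, β: (1) if (F,V),g ⊩ α → β ≤ ¬i, then the valuation V' agreeing with V except V'(j)=V'(k)=V(i) satisfies (F,V'),g ⊩ j ≤ α, (F,V'),g ⊩ β ≤ ¬k, and (F,V'),g ⊩ j → ¬k ≤ ¬i; (2) if (F,V),g ⊩ j ≤ α, (F,V),g ⊩ β ≤ ¬k and (F,V),g ⊩ j → ¬k ≤ ¬i, then (F,V),g ⊩ α → β ≤ ¬i. -/

import Mathlib

inductive Form where
  | prop : ℕ → Form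
  | nom : ℕ → Form
  | svar : ℕ → Form
  | bot : Form
  | top : Form
  | neg : Form → Form
  | and : Form → Form → Form
  | or : Form → Form → Form
  | imp : Form → Form → Form
  | box : Form → Form
  | dia : Form → Form
  | atN : ℕ → Form → Form
  | atS : ℕ → Form → Form
  | bind : ℕ → Form → Form
  | bbox : Form → Form
  | bdia : Form → Form
  | glA : Form → Form
  | glE : Form → Form
  | sall : ℕ → Form → Form
  | sex : ℕ → Form → Form

structure Model (W : Type) where
  R : W → W → Prop
  Vp : ℕ → W → Prop
  Vn : ℕ → W

def upd {W : Type} (g : ℕ → W) (x : ℕ) (w : W) : ℕ → W :=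
  fun y => if y = x then w else g y

def sat {W : Type} (M : Model W) : (ℕ → W) → W → Form → Prop
  | _, w, .prop p => M.Vp p w
  | _, w, .nom i => M.Vn i = w
  | g, w, .svar x => g x = w
  | _, _, .bot => False
  | _, _, .top => True
  | g, w, .neg φ => ¬ sat M g w φ
  | g, w, .and φ ψ => sat M g w φ ∧ sat M g w ψ
  | g, w, .or φ ψ => sat M g w φ ∨ sat M g w ψ
  | g, w, .imp φ ψ => sat M g w φ → sat M g w ψ
  | g, w, .box φ => ∀ v, M.R w v → sat M g v φ
  | g, w, .dia φ => ∃ v, M.R w v ∧ sat M g v φ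
  | g, _, .atN i φ => sat M g (M.Vn i) φ
  | g, _, .atS x φ => sat M g (g x) φ
  | g, w, .bind x φ => sat M (upd g x w) w φ
  | g, w, .bbox φ => ∀ v, M.R v w → sat M g v φ
  | g, w, .bdia φ => ∃ v, M.R v w ∧ sat M g v φ
  | g, _, .glA φ => ∀ v, sat M g v φ
  | g, _, .glE φ => ∃ v, sat M g v φ
  | g, w, .sall x φ => ∀ v, sat M (upd g x v) w φ
  | g, w, .sex x φ => ∃ v, sat M (upd g x v) w φ

/-- The inequality φ ≤ ψ holds in (M,g). -/
def holdsIneq {W : Type} (M : Model W) (g : ℕ → W) (φ ψ : Form) : Prop :=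
  ∀ w, sat M g w φ → sat M g w ψ

/-- Frame validity of an inequality. -/
def validIneq {W : Type} (R : W → W → Prop) (φ ψ : Form) : Prop :=
  ∀ (Vp : ℕ → W → Prop) (Vn : ℕ → W) (g : ℕ → W),
    holdsIneq ⟨R, Vp, Vn⟩ g φ ψ

/-- The nominal `i` occurs in the formula. -/
def nomIn (i : ℕ) : Form → Prop
  | .prop _ => False
  | .nom j => j = i
  | .svar _ => False
  | .bot => False
  | .top => False
  | .neg φ => nomIn i φ
  | .and φ ψ => nomIn i φ ∨ nomIn i ψ
  | .or φ ψ => nomIn i φ ∨ nomIn i ψ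
  | .imp φ ψ => nomIn i φ ∨ nomIn i ψ
  | .box φ => nomIn i φ
  | .dia φ => nomIn i φ
  | .atN j φ => j = i ∨ nomIn i φ
  | .atS _ φ => nomIn i φ
  | .bind _ φ => nomIn i φ
  | .bbox φ => nomIn i φ
  | .bdia φ => nomIn i φ
  | .glA φ => nomIn i φ
  | .glE φ => nomIn i φ
  | .sall _ φ => nomIn i φ
  | .sex _ φ => nomIn i φ


theorem sat_congr {W : Type} (R : W → W → Prop) (Vp : ℕ → W → Prop)
    (Vn Vn' : ℕ → W) :
    ∀ (φ : Form), (∀ n, nomIn n φ → Vn n = Vn' n) →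
      ∀ (g : ℕ → W) (w : W),
        sat ⟨R, Vp, Vn⟩ g w φ ↔ sat ⟨R, Vp, Vn'⟩ g w φ := by
  intro φ
  induction φ with
  | prop p => intro _ g w; simp [sat]
  | nom m => intro h g w; simp [sat, nomIn]; rw [h m rfl]
  | svar x => intro _ g w; simp [sat]
  | bot => intro _ g w; simp [sat]
  | top => intro _ g w; simp [sat]
  | neg φ ih => intro h g w; simp [sat]; rw [ih h g w]
  | and φ ψ ih1 ih2 =>
      intro h g w
      simp [sat]
      rw [ih1 (fun n hn => h n (Or.inl hn)) g w, ih2 (fun n hn => h n (Or.inr hn)) g w]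
  | or φ ψ ih1 ih2 =>
      intro h g w
      simp [sat]
      rw [ih1 (fun n hn => h n (Or.inl hn)) g w, ih2 (fun n hn => h n (Or.inr hn)) g w]
  | imp φ ψ ih1 ih2 =>
      intro h g w
      simp only [sat]
      rw [ih1 (fun n hn => h n (Or.inl hn)) g w, ih2 (fun n hn => h n (Or.inr hn)) g w]
  | box φ ih =>
      intro h g w; simp only [sat]
      exact forall_congr' fun v => imp_congr_right fun _ => ih h g v
  | dia φ ih =>
      intro h g w; simp only [sat]
      exact exists_congr fun v => and_congr_right fun _ => ih h g v
  | atN m φ ih =>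
      intro h g w; simp only [sat]
      rw [h m (Or.inl rfl)]
      exact ih (fun n hn => h n (Or.inr hn)) g _
  | atS x φ ih => intro h g w; simp only [sat]; exact ih h g _
  | bind x φ ih => intro h g w; simp only [sat]; exact ih h _ w
  | bbox φ ih =>
      intro h g w; simp only [sat]
      exact forall_congr' fun v => imp_congr_right fun _ => ih h g v
  | bdia φ ih =>
      intro h g w; simp only [sat]
      exact exists_congr fun v => and_congr_right fun _ => ih h g v
  | glA φ ih =>
      intro h g w; simp only [sat]
      exact forall_congr' fun v => ih h g v
  | glE φ ih =>
      intro h g w; simp only [sat]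
      exact exists_congr fun v => ih h g v
  | sall x φ ih =>
      intro h g w; simp only [sat]
      exact forall_congr' fun v => ih h _ w
  | sex x φ ih =>
      intro h g w; simp only [sat]
      exact exists_congr fun v => ih h _ w

theorem approximation_imp_sound {W : Type} (R : W → W → Prop)
    (Vp : ℕ → W → Prop) (Vn : ℕ → W) (g : ℕ → W)
    (i j k : ℕ) (α β : Form)
    (hji : j ≠ i) (hki : k ≠ i) (hjk : j ≠ k)
    (hjα : ¬ nomIn j α) (hkα : ¬ nomIn k α)
    (hjβ : ¬ nomIn j β) (hkβ : ¬ nomIn k β) :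
    (holdsIneq ⟨R, Vp, Vn⟩ g (.imp α β) (.neg (.nom i)) →
      (holdsIneq ⟨R, Vp, upd (upd Vn j (Vn i)) k (Vn i)⟩ g (.nom j) α ∧
       holdsIneq ⟨R, Vp, upd (upd Vn j (Vn i)) k (Vn i)⟩ g β (.neg (.nom k)) ∧
       holdsIneq ⟨R, Vp, upd (upd Vn j (Vn i)) k (Vn i)⟩ g
         (.imp (.nom j) (.neg (.nom k))) (.neg (.nom i)))) ∧
    (holdsIneq ⟨R, Vp, Vn⟩ g (.nom j) α →
     holdsIneq ⟨R, Vp, Vn⟩ g β (.neg (.nom k)) →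
     holdsIneq ⟨R, Vp, Vn⟩ g (.imp (.nom j) (.neg (.nom k))) (.neg (.nom i)) →
     holdsIneq ⟨R, Vp, Vn⟩ g (.imp α β) (.neg (.nom i))) := by
  
  classical
  set vi := Vn i with hvi
  set Vn' := upd (upd Vn j vi) k vi with hVn'
  have hagree : ∀ (φ : Form), ¬ nomIn j φ → ¬ nomIn k φ →
      ∀ n, nomIn n φ → Vn n = Vn' n := by
    intro φ hj hk n hn
    have hnj : n ≠ j := fun h => hj (h ▸ hn)
    have hnk : n ≠ k := fun h => hk (h ▸ hn)
    simp [hVn', upd, hnj, hnk]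
  constructor
  · intro h
    have hi : ¬ sat ⟨R, Vp, Vn⟩ g vi (.imp α β) := by
      intro hsat
      exact h vi hsat rfl
    rw [sat] at hi
    push_neg at hi
    obtain ⟨hα, hβ⟩ := hi
    have hVn'j : Vn' j = vi := by simp [hVn', upd, hjk]
    have hVn'k : Vn' k = vi := by simp [hVn', upd]
    have hVn'i : Vn' i = vi := by simp [hVn', upd, (Ne.symm hji), (Ne.symm hki), hvi]
    refine ⟨?_, ?_, ?_⟩
    · intro w hw
      rw [sat] at hw
      have : w = vi := hw ▸ hVn'j
      subst this
      exact (sat_congr R Vp Vn Vn' α (hagree α hjα hkα) g vi).mp hα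
    · intro w hw hk
      rw [sat] at hk
      have : w = vi := hk ▸ hVn'k
      subst this
      exact hβ ((sat_congr R Vp Vn Vn' β (hagree β hjβ hkβ) g vi).mpr hw)
    · intro w hw hi
      rw [sat] at hi
      have : w = vi := hi ▸ hVn'i
      subst this
      rw [sat, sat, sat] at hw
      exact hw hVn'j hVn'k
  · intro h1 h2 h3 w hw hi
    rw [sat] at hi
    subst hi
    have hjk' : ¬ (Vn j = Vn i → Vn i ≠ Vn k) := by
      intro hc
      exact h3 (Vn i) (fun hj hk => (hc hj) hk.symm) rfl
    push_neg at hjk'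
    obtain ⟨hj', hk'⟩ := hjk'
    have hα : sat ⟨R, Vp, Vn⟩ g (Vn i) α := h1 (Vn i) hj'
    have hβ : sat ⟨R, Vp, Vn⟩ g (Vn i) β := hw hα
    exact h2 (Vn i) hβ hk'.symm
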